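/- Let ℓ < ℓ', x ∈ [0, 2^{ℓ-1}), r ∈ [0, 2^ℓ), y = (x + r) mod 2^ℓ, and ŵ = r_{ℓ-1} ∧ ¬y_{ℓ-1} (as a bit in {0,1}). Then (y - r + ŵ · 2^ℓ) mod 2^{ℓ'} = x. -/
import Mathlib

lemma ediv_one_of (a y : ℤ) (h0 : 0 < a) (h1 : a ≤ y) (h2 : y < 2 * a) : y / a = 1 := by
  have : y = (y - a) + 1 * a := by ring
  rw [this, Int.add_mul_ediv_right _ _ (ne_of_gt h0),
    Int.ediv_eq_zero_of_lt (by linarith) (by linarith)]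
  norm_num

/-- End-to-end correctness of the UpCast core computation. -/
theorem stmt6 (ℓ ℓ' : ℕ) (hℓ : ℓ < ℓ') (hℓ1 : 1 ≤ ℓ) (x r : ℤ)
    (hx : 0 ≤ x ∧ x < 2 ^ (ℓ - 1)) (hr : 0 ≤ r ∧ r < 2 ^ ℓ)
    (y w : ℤ) (hy : y = (x + r) % 2 ^ ℓ)
    (hw : w = if (r / 2 ^ (ℓ - 1)) % 2 = 1 ∧ (y / 2 ^ (ℓ - 1)) % 2 = 0 then 1 else 0) :
    (y - r + w * 2 ^ ℓ) % 2 ^ ℓ' = x := by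
  obtain ⟨hx0, hx1⟩ := hx
  obtain ⟨hr0, hr1⟩ := hr
  set a : ℤ := 2 ^ (ℓ - 1) with hadef
  have ha0 : 0 < a := by positivity
  have ha : (2:ℤ) ^ ℓ = 2 * a := by
    rw [hadef, ← pow_succ']
    congr 1
    omega
  have key : y - r + w * 2 ^ ℓ = x := by
    by_cases hc : x + r < 2 ^ ℓ
    · have hy' : y = x + r := by rw [hy]; exact Int.emod_eq_of_lt (by linarith) hc
      have hyb : ¬ ((r / a) % 2 = 1 ∧ (y / a) % 2 = 0) := by
        rintro ⟨h1, h2⟩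
        have hra : a ≤ r := by
          by_contra h
          push_neg at h
          rw [Int.ediv_eq_zero_of_lt hr0 h] at h1
          norm_num at h1
        have hy1 : y / a = 1 := ediv_one_of a y ha0 (by omega) (by omega)
        omega
      simp only [hw, if_neg hyb]
      linarith
    · push_neg at hc
      have hy' : y = x + r - 2 ^ ℓ := by
        rw [hy]
        conv_lhs => rw [show x + r = (x + r - 2 ^ ℓ) + 1 * 2 ^ ℓ by ring,
          Int.add_mul_emod_self_right]
        exact Int.emod_eq_of_lt (by linarith) (by linarith)
      have hr1' : r / a = 1 := ediv_one_of a r ha0 (by omega) (by omega)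
      have hy0 : y / a = 0 := Int.ediv_eq_zero_of_lt (by omega) (by omega)
      have : (r / a) % 2 = 1 ∧ (y / a) % 2 = 0 := by omega
      simp only [hw, if_pos this]
      linarith
  rw [key]
  have hx2 : x < 2 ^ ℓ' := by
    calc x < a := hx1
    _ ≤ 2 ^ ℓ' := by
      rw [hadef]
      exact pow_le_pow_right₀ (by norm_num) (by omega)
  exact Int.emod_eq_of_lt hx0 hx2
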